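/- Let Y, X* be random variables on a finite probability space, Δ a binary indicator with φ(y,x) := P(Δ=1 | Y=y, X*=x) > 0. Then for every x with P(X*=x, Δ=1) > 0, P(Δ=1 | X*=x) = ( E[ 1/φ(Y, x) | Δ=1, X*=x ] )^{-1}. -/

import Mathlib

open scoped BigOperators
attribute [local instance] Classical.propDecidable

/-- Probability of an event under weight function `p` on a finite space. -/
noncomputable def Pr {Ω : Type*} [Fintype Ω] (p : Ω → ℝ) (A : Set Ω) : ℝ :=
  ∑ ω, if ω ∈ A then p ω else 0

/-- Conditional probability of `A` given `B`. -/
noncomputable def condPr {Ω : Type*} [Fintype Ω] (p : Ω → ℝ) (A B : Set Ω) : ℝ :=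
  Pr p (A ∩ B) / Pr p B

/-- Conditional expectation of `f` given event `B`. -/
noncomputable def condE {Ω : Type*} [Fintype Ω] (p : Ω → ℝ) (f : Ω → ℝ) (B : Set Ω) : ℝ :=
  (∑ ω, if ω ∈ B then p ω * f ω else 0) / Pr p B

/-- Expectation of `f`. -/
noncomputable def Ex {Ω : Type*} [Fintype Ω] (p : Ω → ℝ) (f : Ω → ℝ) : ℝ :=
  ∑ ω, p ω * f ω

/-- harmonic-mean representation:
`P(Δ=1 | X*=x) = (E[1/φ(Y,x) | Δ=1, X*=x])⁻¹`. -/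
theorem stmt3 {Ω α β : Type*} [Fintype Ω]
    (p : Ω → ℝ) (hp : ∀ ω, 0 ≤ p ω) (hsum : ∑ ω, p ω = 1)
    (Y : Ω → α) (X : Ω → β) (D : Ω → Bool)
    (φ : α → β → ℝ)
    (hφdef : ∀ y x, φ y x =
      condPr p {ω' | D ω' = true} {ω' | Y ω' = y ∧ X ω' = x})
    (hφpos : ∀ y x, 0 < Pr p {ω' | Y ω' = y ∧ X ω' = x} → 0 < φ y x) :
    ∀ x, 0 < Pr p {ω' | X ω' = x ∧ D ω' = true} →
      condPr p {ω' | D ω' = true} {ω' | X ω' = x}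
        = (condE p (fun ω' => 1 / φ (Y ω') x) {ω' | D ω' = true ∧ X ω' = x})⁻¹ := by
  classical
  intro x _hx
  -- fiber sums
  have hA : ∀ y : α, Pr p {ω' | Y ω' = y ∧ X ω' = x}
      = ∑ ω ∈ Finset.univ.filter (fun ω => Y ω = y), (if X ω = x then p ω else 0) := by
    intro y
    rw [Finset.sum_filter]
    unfold Pr
    apply Finset.sum_congr rfl
    intro ω _
    by_cases h : Y ω = y <;> simp [h, Set.mem_setOf_eq]
  have hB : ∀ y : α, Pr p ({ω' | D ω' = true} ∩ {ω' | Y ω' = y ∧ X ω' = x})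
      = ∑ ω ∈ Finset.univ.filter (fun ω => Y ω = y),
          (if D ω = true ∧ X ω = x then p ω else 0) := by
    intro y
    rw [Finset.sum_filter]
    unfold Pr
    apply Finset.sum_congr rfl
    intro ω _
    by_cases h : Y ω = y <;> by_cases h2 : D ω = true <;>
      simp [h, h2, Set.mem_setOf_eq, and_comm, and_assoc]
  -- key: numerator of condE equals Pr p {X = x}
  have key : (∑ ω, if ω ∈ {ω' | D ω' = true ∧ X ω' = x}
        then p ω * (fun ω' => 1 / φ (Y ω') x) ω else 0)
      = Pr p {ω' | X ω' = x} := by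
    have h1 : (∑ ω, if ω ∈ {ω' | D ω' = true ∧ X ω' = x}
          then p ω * (fun ω' => 1 / φ (Y ω') x) ω else 0)
        = ∑ y ∈ Finset.univ.image Y, ∑ ω ∈ Finset.univ.filter (fun ω => Y ω = y),
            (if D ω = true ∧ X ω = x then p ω * (1 / φ (Y ω) x) else 0) := by
      rw [Finset.sum_fiberwise_of_maps_to (fun ω _ => Finset.mem_image_of_mem Y
        (Finset.mem_univ ω))]
      rfl
    have h2 : Pr p {ω' | X ω' = x}
        = ∑ y ∈ Finset.univ.image Y, ∑ ω ∈ Finset.univ.filter (fun ω => Y ω = y),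
            (if X ω = x then p ω else 0) := by
      rw [Finset.sum_fiberwise_of_maps_to (fun ω _ => Finset.mem_image_of_mem Y
        (Finset.mem_univ ω))]
      rfl
    rw [h1, h2]
    apply Finset.sum_congr rfl
    intro y _
    -- rewrite φ (Y ω) x to φ y x on the fiber, then factor it out
    have hfib : ∑ ω ∈ Finset.univ.filter (fun ω => Y ω = y),
          (if D ω = true ∧ X ω = x then p ω * (1 / φ (Y ω) x) else 0)
        = (∑ ω ∈ Finset.univ.filter (fun ω => Y ω = y),
            (if D ω = true ∧ X ω = x then p ω else 0)) * (1 / φ y x) := by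
      rw [Finset.sum_mul]
      apply Finset.sum_congr rfl
      intro ω hω
      have hy : Y ω = y := (Finset.mem_filter.mp hω).2
      by_cases h : D ω = true ∧ X ω = x <;> simp [h, hy]
    rw [hfib, ← hA, ← hB]
    set A := Pr p {ω' | Y ω' = y ∧ X ω' = x} with hAdef
    set B := Pr p ({ω' | D ω' = true} ∩ {ω' | Y ω' = y ∧ X ω' = x}) with hBdef
    have hφ : φ y x = B / A := by rw [hφdef]; rfl
    have hAnn : 0 ≤ A := by
      rw [hAdef, hA]; apply Finset.sum_nonneg; intro ω _; split_ifs <;> simp [hp ω]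
    rcases eq_or_lt_of_le hAnn with hA0 | hApos
    · -- A = 0, hence B = 0
      have hBA : B ≤ A := by
        rw [hAdef, hBdef, hA, hB]
        apply Finset.sum_le_sum
        intro ω _
        by_cases h : X ω = x <;> by_cases h2 : D ω = true <;> simp [h, h2, hp ω]
      have hBnn : 0 ≤ B := by
        rw [hBdef, hB]; apply Finset.sum_nonneg; intro ω _; split_ifs <;> simp [hp ω]
      have hB0 : B = 0 := le_antisymm (hBA.trans hA0.symm.le) hBnn
      rw [hB0, ← hA0]; ring
    · have hφp : 0 < φ y x := hφpos y x hApos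
      have hBval : B = φ y x * A := by
        rw [hφ, div_mul_cancel₀ B (ne_of_gt hApos)]
      rw [hBval]
      field_simp
  -- finish
  have hset : {ω' | D ω' = true ∧ X ω' = x}
      = {ω' | D ω' = true} ∩ {ω' | X ω' = x} := rfl
  unfold condE condPr
  rw [inv_div]
  congr 1
  exact ((Finset.sum_congr rfl fun ω _ => by congr 1).trans key).symm
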